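/- Let G be a group, H_1, ..., H_n subgroups of H where H is a normal finite-index subgroup of G which is product separable, and let g_1, ..., g_n ∈ G. Then the set S = g_1 H_1 g_2 H_2 ⋯ g_n H_n is closed in the profinite topology on G, provided each H_i is finitely generated. -/
import Mathlib


/-- The profinite topology on a group `G`: generated by cosets of finite-index subgroups. -/
def profiniteTopology (G : Type*) [Group G] : TopologicalSpace G :=
  TopologicalSpace.generateFrom
    {S : Set G | ∃ (H : Subgroup G) (g : G), H.FiniteIndex ∧ S = (g * ·) '' (H : Set G)}

/-- A group is product separable if every product of finitely many finitely generated
subgroups is closed in the profinite topology. -/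
def ProductSeparable (G : Type*) [Group G] : Prop :=
  ∀ (n : ℕ) (H : Fin n → Subgroup G), (∀ i, (H i).FG) →
    @IsClosed G (profiniteTopology G)
      {x : G | ∃ f : Fin n → G, (∀ i, f i ∈ H i) ∧ x = (List.ofFn f).prod}

open Topology

section Helpers

variable {G : Type*} [Group G]

lemma mem_coset_iff' (K : Subgroup G) (a x : G) :
    x ∈ (a * ·) '' (K : Set G) ↔ a⁻¹ * x ∈ K := by
  constructor
  · rintro ⟨k, hk, rfl⟩; simpa
  · intro h; exact ⟨a⁻¹ * x, h, by group⟩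

lemma isOpen_coset' (K : Subgroup G) (hK : K.FiniteIndex) (a : G) :
    IsOpen[profiniteTopology G] ((a * ·) '' (K : Set G)) :=
  TopologicalSpace.isOpen_generateFrom_of_mem ⟨K, a, hK, rfl⟩

lemma isClosed_coset' (K : Subgroup G) (hK : K.FiniteIndex) (a : G) :
    IsClosed[profiniteTopology G] ((a * ·) '' (K : Set G)) := by
  letI := profiniteTopology G
  rw [← isOpen_compl_iff]
  have hcompl : ((a * ·) '' (K : Set G))ᶜ =
      ⋃ y ∈ ((a * ·) '' (K : Set G))ᶜ, (y * ·) '' (K : Set G) := by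
    ext x
    simp only [Set.mem_iUnion, Set.mem_compl_iff, mem_coset_iff']
    constructor
    · intro hx; exact ⟨x, hx, by simpa using K.one_mem⟩
    · rintro ⟨y, hy, hyx⟩ hax
      refine hy ?_
      have : a⁻¹ * y = (a⁻¹ * x) * (y⁻¹ * x)⁻¹ := by group
      exact this ▸ K.mul_mem hax (K.inv_mem hyx)
  rw [hcompl]
  exact isOpen_biUnion fun y _ => isOpen_coset' K hK y

lemma continuous_mul_right_profinite (P : G) :
    Continuous[profiniteTopology G, profiniteTopology G] (· * P) := by
  letI := profiniteTopology G
  apply continuous_generateFrom_iff.mpr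
  rintro s ⟨K, a, hK, rfl⟩
  have hpre : (· * P) ⁻¹' ((a * ·) '' (K : Set G)) =
      ((a * P⁻¹) * ·) '' ((K.comap (MulAut.conj P⁻¹).toMonoidHom : Subgroup G) : Set G) := by
    ext x
    simp only [Set.mem_preimage, mem_coset_iff', Subgroup.mem_comap,
      MulEquiv.coe_toMonoidHom, MulAut.conj_apply]
    have : P⁻¹ * ((a * P⁻¹)⁻¹ * x) * P⁻¹⁻¹ = a⁻¹ * (x * P) := by group
    rw [this]
  rw [hpre]
  refine isOpen_coset' _ ⟨?_⟩ _
  rw [Subgroup.index_comap_of_surjective _ (MulEquiv.surjective _)]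
  exact hK.index_ne_zero

lemma isClosed_image_mul_right_profinite {T : Set G}
    (hT : IsClosed[profiniteTopology G] T) (P : G) :
    IsClosed[profiniteTopology G] ((· * P) '' T) := by
  letI := profiniteTopology G
  have himg : (· * P) '' T = (· * P⁻¹) ⁻¹' T := by
    ext x
    constructor
    · rintro ⟨t, ht, rfl⟩; simpa
    · intro h; exact ⟨x * P⁻¹, h, by group⟩
  rw [himg]
  exact hT.preimage (continuous_mul_right_profinite P⁻¹)

lemma isOpen_image_subtype_profinite (H : Subgroup G) (hfi : H.FiniteIndex) {U : Set ↥H}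
    (hU : IsOpen[profiniteTopology ↥H] U) :
    IsOpen[profiniteTopology G] (((↑) : ↥H → G) '' U) := by
  letI := profiniteTopology G
  have hU' : TopologicalSpace.GenerateOpen
      {S : Set ↥H | ∃ (K : Subgroup ↥H) (g : ↥H), K.FiniteIndex ∧
        S = (g * ·) '' (K : Set ↥H)} U := hU
  clear hU
  induction hU' with
  | basic s hs =>
    obtain ⟨K, a, hK, rfl⟩ := hs
    have himg : (((↑) : ↥H → G) '' ((a * ·) '' (K : Set ↥H))) =
        ((a : G) * ·) '' ((K.map H.subtype : Subgroup G) : Set G) := by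
      ext x
      constructor
      · rintro ⟨y, ⟨k, hk, rfl⟩, rfl⟩
        exact ⟨(k : G), ⟨k, hk, rfl⟩, rfl⟩
      · rintro ⟨y, ⟨k, hk, rfl⟩, rfl⟩
        exact ⟨a * k, ⟨k, hk, rfl⟩, rfl⟩
    rw [himg]
    refine isOpen_coset' _ ⟨?_⟩ _
    have h2 : (K.map H.subtype).relIndex H = K.index := by
      rw [Subgroup.relIndex, Subgroup.subgroupOf,
        Subgroup.comap_map_eq_self_of_injective H.subtype_injective]
    have h1 : (K.map H.subtype).relIndex H * H.index = (K.map H.subtype).index :=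
      Subgroup.relIndex_mul_index (Subgroup.map_subtype_le K)
    rw [← h1, h2]
    exact mul_ne_zero hK.index_ne_zero hfi.index_ne_zero
  | univ =>
    have himg : (((↑) : ↥H → G) '' Set.univ) = ((1 : G) * ·) '' (H : Set G) := by
      ext x
      rw [mem_coset_iff']
      simp
    rw [himg]
    exact isOpen_coset' H hfi 1
  | inter s t _ _ ihs iht =>
    rw [Set.image_inter Subtype.coe_injective]
    exact ihs.inter iht
  | sUnion S _ ih =>
    rw [Set.image_sUnion]
    exact isOpen_sUnion (by rintro t ⟨u, hu, rfl⟩; exact ih u hu)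

lemma isClosed_image_subtype_profinite (H : Subgroup G) (hfi : H.FiniteIndex) {T : Set ↥H}
    (hT : IsClosed[profiniteTopology ↥H] T) :
    IsClosed[profiniteTopology G] (((↑) : ↥H → G) '' T) := by
  letI := profiniteTopology G
  letI := profiniteTopology ↥H
  rw [← isOpen_compl_iff]
  have hHset : ((1 : G) * ·) '' (H : Set G) = (H : Set G) := by
    ext x; rw [mem_coset_iff']; simp
  have hHcl : IsClosed (H : Set G) := hHset ▸ isClosed_coset' H hfi 1
  have hcompl : (((↑) : ↥H → G) '' T)ᶜ = (((↑) : ↥H → G) '' Tᶜ) ∪ (H : Set G)ᶜ := by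
    ext x
    simp only [Set.mem_compl_iff, Set.mem_union, Set.mem_image]
    constructor
    · intro hx
      by_cases hxH : x ∈ H
      · exact Or.inl ⟨⟨x, hxH⟩, fun ht => hx ⟨⟨x, hxH⟩, ht, rfl⟩, rfl⟩
      · exact Or.inr hxH
    · rintro (⟨t, ht, rfl⟩ | hxH)
      · rintro ⟨t', ht', hco⟩
        exact ht (Subtype.coe_injective hco ▸ ht')
      · rintro ⟨t, _, rfl⟩
        exact hxH t.2
  rw [hcompl]
  exact (isOpen_image_subtype_profinite H hfi (isOpen_compl_iff.mpr hT)).union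
    hHcl.isOpen_compl

/-- Prefix product `g 0 * g 1 * ⋯ * g i`. -/
def profinitePref {n : ℕ} (g : Fin n → G) (i : Fin n) : G :=
  ((List.ofFn g).take (i + 1)).prod

lemma profinitePref_zero {n : ℕ} (g : Fin (n + 1) → G) : profinitePref g 0 = g 0 := by
  simp [profinitePref, List.ofFn_succ]

lemma profinitePref_succ {n : ℕ} (g : Fin (n + 1) → G) (i : Fin n) :
    profinitePref g i.succ = g 0 * profinitePref (fun j => g j.succ) i := by
  simp [profinitePref, List.ofFn_succ, List.take_succ_cons, Fin.val_succ]

lemma list_map_conj_prod (a : G) (l : List G) :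
    (l.map fun x => a * x * a⁻¹).prod = a * l.prod * a⁻¹ := by
  induction l with
  | nil => simp
  | cons b l ih => simp only [List.map_cons, List.prod_cons, ih]; group

lemma conj_prod_eq (n : ℕ) (g f : Fin n → G) :
    (List.ofFn fun i => g i * f i).prod =
      (List.ofFn fun i => profinitePref g i * f i * (profinitePref g i)⁻¹).prod *
        (List.ofFn g).prod := by
  induction n with
  | zero => simp
  | succ n ih =>
    have IH : (List.ofFn fun i : Fin n => g i.succ * f i.succ).prod =
        (List.ofFn fun i : Fin n => profinitePref (fun j => g j.succ) i * f i.succ *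
          (profinitePref (fun j => g j.succ) i)⁻¹).prod *
          (List.ofFn fun i : Fin n => g i.succ).prod := ih (fun i => g i.succ) (fun i => f i.succ)
    simp only [List.ofFn_succ, List.prod_cons, profinitePref_succ, profinitePref_zero]
    rw [IH]
    have e1 : (List.ofFn fun i : Fin n =>
          g 0 * profinitePref (fun j => g j.succ) i * f i.succ *
            (g 0 * profinitePref (fun j => g j.succ) i)⁻¹) =
        List.map (fun x => g 0 * x * (g 0)⁻¹)
          (List.ofFn fun i : Fin n => profinitePref (fun j => g j.succ) i * f i.succ *
            (profinitePref (fun j => g j.succ) i)⁻¹) := by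
      rw [List.map_ofFn]
      congr 1
      funext i
      simp only [Function.comp_apply]
      group
    rw [e1, list_map_conj_prod]
    group

end Helpers

/-- If `H` is a normal finite-index product-separable subgroup of `G`, `H₁, …, Hₙ` are
finitely generated subgroups of `H` and `g₁, …, gₙ ∈ G`, then the set
`g₁H₁g₂H₂⋯gₙHₙ` is closed in the profinite topology on `G`. -/
theorem coset_product_closed {G : Type*} [Group G] (H : Subgroup G) (hnorm : H.Normal)
    (hfi : H.FiniteIndex) (hps : ProductSeparable ↥H)
    (n : ℕ) (Hs : Fin n → Subgroup G) (hle : ∀ i, Hs i ≤ H) (hfg : ∀ i, (Hs i).FG)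
    (g : Fin n → G) :
    @IsClosed G (profiniteTopology G)
      {x : G | ∃ f : Fin n → G, (∀ i, f i ∈ Hs i) ∧
        x = (List.ofFn (fun i => g i * f i)).prod} := by
  classical
  letI := profiniteTopology G
  set P : G := (List.ofFn g).prod with hP
  set M : Fin n → Subgroup G :=
    fun i => (Hs i).map (MulAut.conj (profinitePref g i)).toMonoidHom with hM
  have hMle : ∀ i : Fin n, M i ≤ H := by
    rintro i x ⟨y, hy, rfl⟩
    simpa [MulAut.conj_apply] using hnorm.conj_mem y (hle i hy) (profinitePref g i)
  set K : Fin n → Subgroup ↥H := fun i => (M i).subgroupOf H with hK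
  have hKfg : ∀ i, (K i).FG := by
    intro i
    have hMfg : (M i).FG := by
      obtain ⟨S, hS⟩ := hfg i
      rw [Subgroup.fg_iff]
      refine ⟨(MulAut.conj (profinitePref g i)).toMonoidHom '' ↑S, ?_, S.finite_toSet.image _⟩
      show _ = (Hs i).map (MulAut.conj (profinitePref g i)).toMonoidHom
      rw [← hS, MonoidHom.map_closure]
    haveI : Group.FG ↥(M i) := (Group.fg_iff_subgroup_fg (M i)).mpr hMfg
    rw [← Group.fg_iff_subgroup_fg]
    exact Group.fg_of_surjective
      (f := (Subgroup.subgroupOfEquivOfLe (hMle i)).symm.toMonoidHom)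
      (MulEquiv.surjective _)
  have hclosed := hps n K hKfg
  have h2 := isClosed_image_subtype_profinite H hfi hclosed
  have h3 := isClosed_image_mul_right_profinite h2 P
  have hset : {x : G | ∃ f : Fin n → G, (∀ i, f i ∈ Hs i) ∧
      x = (List.ofFn (fun i => g i * f i)).prod} =
      (· * P) '' (((↑) : ↥H → G) ''
        {x : ↥H | ∃ e : Fin n → ↥H, (∀ i, e i ∈ K i) ∧ x = (List.ofFn e).prod}) := by
    ext x
    simp only [Set.mem_setOf_eq, Set.mem_image]
    constructor
    · rintro ⟨f, hf, rfl⟩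
      set E : Fin n → ↥H := fun i =>
        ⟨profinitePref g i * f i * (profinitePref g i)⁻¹,
          hnorm.conj_mem _ (hle i (hf i)) _⟩ with hE
      have hcoe : (((List.ofFn E).prod : ↥H) : G) =
          (List.ofFn fun i => profinitePref g i * f i * (profinitePref g i)⁻¹).prod := by
        rw [show (((List.ofFn E).prod : ↥H) : G) = H.subtype (List.ofFn E).prod from rfl,
          map_list_prod, List.map_ofFn]
        rfl
      refine ⟨((List.ofFn E).prod : ↥H), ⟨(List.ofFn E).prod, ⟨E, ?_, rfl⟩, rfl⟩, ?_⟩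
      · intro i
        exact Subgroup.mem_subgroupOf.mpr ⟨f i, hf i, rfl⟩
      · rw [hcoe, hP, ← conj_prod_eq]
    · rintro ⟨y, ⟨t, ⟨e, he, rfl⟩, rfl⟩, rfl⟩
      have hmem : ∀ i, ∃ y ∈ Hs i,
          (MulAut.conj (profinitePref g i)).toMonoidHom y = ((e i : ↥H) : G) := by
        intro i
        exact Subgroup.mem_map.mp (Subgroup.mem_subgroupOf.mp (he i))
      choose f hf hfe using hmem
      refine ⟨f, hf, ?_⟩
      have hcoe : (((List.ofFn e).prod : ↥H) : G) =
          (List.ofFn fun i => ((e i : ↥H) : G)).prod := by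
        rw [show (((List.ofFn e).prod : ↥H) : G) = H.subtype (List.ofFn e).prod from rfl,
          map_list_prod, List.map_ofFn]
        rfl
      rw [conj_prod_eq, hcoe]
      have hcongr : (fun i : Fin n => ((e i : ↥H) : G)) =
          fun i => profinitePref g i * f i * (profinitePref g i)⁻¹ := by
        funext i
        rw [← hfe i]
        rfl
      rw [hcongr]
  rw [hset]
  exact h3
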